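/- Let (Ω, 𝓕) be a measurable space and let P and P̃ be probability measures on Ω with P̃ absolutely continuous with respect to P; let g denote the Radon–Nikodym derivative dP̃/dP. Let v̂ : Ω → ℝ be measurable, and let v, ṽ ∈ ℝ and ρ, ρ̃ ≥ 0 satisfy |v − ṽ| ≥ ρ + ρ̃. If P({ω : g(ω) ≥ 1/2}) ≥ 1/2, then P({ω : |v − v̂(ω)| ≥ ρ}) ≥ 1/6 or P̃({ω : |ṽ − v̂(ω)| ≥ ρ̃}) ≥ 1/6. -/
import Mathlib


open MeasureTheory

/-- **Reduction of the minimax lower bound to a likelihood-ratio test.**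
If the Radon–Nikodym derivative `g = dP̃/dP` satisfies `P(g ≥ 1/2) ≥ 1/2` and
`|v − ṽ| ≥ ρ + ρ̃`, then any estimator `v̂` incurs error at least `ρ` under `P` with
probability at least `1/6`, or error at least `ρ̃` under `P̃` with probability at
least `1/6`. -/
theorem likelihood_ratio_test_reduction {Ω : Type*} [MeasurableSpace Ω]
    (P Pt : Measure Ω) [IsProbabilityMeasure P] [IsProbabilityMeasure Pt]
    (hac : Pt ≪ P)
    (vhat : Ω → ℝ) (hvhat : Measurable vhat)
    (v vt ρ ρt : ℝ) (hρ : 0 ≤ ρ) (hρt : 0 ≤ ρt)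
    (hgap : ρ + ρt ≤ |v - vt|)
    (hlr : (1 / 2 : ENNReal) ≤ P {ω | (1 / 2 : ENNReal) ≤ Pt.rnDeriv P ω}) :
    (1 / 6 : ENNReal) ≤ P {ω | ρ ≤ |v - vhat ω|} ∨
      (1 / 6 : ENNReal) ≤ Pt {ω | ρt ≤ |vt - vhat ω|} := by
  set g := Pt.rnDeriv P with hg
  set A := {ω | ρ ≤ |v - vhat ω|} with hA
  set G := {ω | (1 / 2 : ENNReal) ≤ g ω} with hG
  have hAmeas : MeasurableSet A :=
    measurableSet_le measurable_const ((measurable_const.sub hvhat).abs)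
  have hGmeas : MeasurableSet G :=
    measurableSet_le measurable_const (Pt.measurable_rnDeriv P)
  by_contra hcon
  push_neg at hcon
  obtain ⟨h1, h2⟩ := hcon
  -- complement of A is contained in the bad event for Pt
  have hsub : Aᶜ ⊆ {ω | ρt ≤ |vt - vhat ω|} := by
    intro ω hω
    simp only [hA, Set.mem_compl_iff, Set.mem_setOf_eq, not_le] at hω ⊢
    have htri : |v - vt| ≤ |v - vhat ω| + |vhat ω - vt| := abs_sub_le v (vhat ω) vt
    rw [abs_sub_comm (vhat ω) vt] at htri
    linarith
  set S := Aᶜ ∩ G with hS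
  have hSmeas : MeasurableSet S := hAmeas.compl.inter hGmeas
  -- union bound: G ⊆ A ∪ S
  have hGsub : G ⊆ A ∪ S := by
    intro ω hω
    by_cases hωA : ω ∈ A
    · exact Or.inl hωA
    · exact Or.inr ⟨hωA, hω⟩
  have hbound : (1 / 2 : ENNReal) ≤ P A + P S :=
    hlr.trans ((measure_mono hGsub).trans (measure_union_le A S))
  have harith1 : (1 / 6 + 1 / 3 : ENNReal) = 1 / 2 := by
    refine (ENNReal.toReal_eq_toReal_iff' (by simp) (by simp)).mp ?_
    rw [ENNReal.toReal_add (by simp) (by simp)]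
    simp [ENNReal.toReal_div]
    norm_num
  have hPS : (1 / 3 : ENNReal) ≤ P S := by
    by_contra hc
    push_neg at hc
    have := ENNReal.add_lt_add h1 hc
    rw [harith1] at this
    exact absurd hbound (not_le.mpr this)
  -- lower bound Pt S via the likelihood ratio
  have hint : Pt S = ∫⁻ ω in S, g ω ∂P :=
    (Measure.setLIntegral_rnDeriv hac S).symm
  have hlow : (1 / 2 : ENNReal) * P S ≤ Pt S := by
    rw [hint]
    calc (1 / 2 : ENNReal) * P S = ∫⁻ _ in S, (1 / 2 : ENNReal) ∂P := by
          rw [setLIntegral_const]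
      _ ≤ ∫⁻ ω in S, g ω ∂P := by
          refine setLIntegral_mono (Pt.measurable_rnDeriv P) ?_
          intro ω hω
          exact hω.2
  have hfinal : (1 / 6 : ENNReal) ≤ Pt {ω | ρt ≤ |vt - vhat ω|} := by
    have h6 : (1 / 6 : ENNReal) = 1 / 2 * (1 / 3) := by
      refine (ENNReal.toReal_eq_toReal_iff' (by simp) (by simp [ENNReal.mul_eq_top])).mp ?_
      rw [ENNReal.toReal_mul]
      simp [ENNReal.toReal_div]
      norm_num
    calc (1 / 6 : ENNReal) = 1 / 2 * (1 / 3) := h6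
      _ ≤ 1 / 2 * P S := by gcongr
      _ ≤ Pt S := hlow
      _ ≤ Pt Aᶜ := measure_mono Set.inter_subset_left
      _ ≤ Pt {ω | ρt ≤ |vt - vhat ω|} := measure_mono hsub
  exact absurd hfinal (not_le.mpr h2)
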